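/- (A priori estimate of Theorem 2.3.) Under the propagator setup and the solution setup, assume additionally: ‖V(t)u(t)‖ is differentiable in t on [0,T); there is ω ≥ 0 with β(t) ≤ α(t)·ω^p·‖U(t)‖^p for all t ≥ 0; ‖u₀‖ + ω > 0; J := ∫₀^∞ α(ξ)·‖V(ξ)‖·‖U(ξ)‖^p dξ < ∞; and (‖u₀‖ + ω)^{1−p} > (p−1)·J. Set M₃ := 1/((‖u₀‖ + ω)^{1−p} − (p−1)·J). Then for all t ∈ [0,T): ‖u(t)‖ ≤ ‖U(t)‖·(M₃^{1/(p−1)} − ω). -/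

import Mathlib

open MeasureTheory Filter
open scoped ENNReal

private lemma aux_add_rpow {a b p : ℝ} (ha : 0 ≤ a) (hb : 0 ≤ b) (hp : 1 ≤ p) :
    a ^ p + b ^ p ≤ (a + b) ^ p := by
  have h := NNReal.coe_le_coe.mpr (NNReal.add_rpow_le_rpow_add (NNReal.mk a ha) (NNReal.mk b hb) hp)
  simpa [NNReal.coe_rpow] using h

theorem stmt5
    {X : Type*} [NormedAddCommGroup X] [NormedSpace ℝ X] [CompleteSpace X]
    (B U V : ℝ → X →L[ℝ] X)
    (hB : Continuous B)
    (hU0 : U 0 = 1) (hV0 : V 0 = 1)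
    (hVU : ∀ t, 0 ≤ t → (V t).comp (U t) = 1)
    (hUV : ∀ t, 0 ≤ t → (U t).comp (V t) = 1)
    (hUd : ∀ t, 0 ≤ t → HasDerivAt U ((B t).comp (U t)) t)
    (hVd : ∀ t, 0 ≤ t → HasDerivAt V (-((V t).comp (B t))) t)
    (p : ℝ) (hp : 1 < p)
    (α β : ℝ → ℝ) (hαc : Continuous α) (hβc : Continuous β)
    (hα0 : ∀ t, 0 ≤ α t) (hβ0 : ∀ t, 0 ≤ β t)
    (T : ℝ≥0∞) (hT : 0 < T)
    (u G f : ℝ → X) (u₀ : X) (hu0 : u 0 = u₀)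
    (hGc : ContinuousOn G {t : ℝ | 0 ≤ t ∧ ENNReal.ofReal t < T})
    (hfc : ContinuousOn f {t : ℝ | 0 ≤ t ∧ ENNReal.ofReal t < T})
    (hud : ∀ t, 0 ≤ t → ENNReal.ofReal t < T → HasDerivAt u (B t (u t) + G t + f t) t)
    (hGb : ∀ t, 0 ≤ t → ENNReal.ofReal t < T → ‖G t‖ ≤ α t * ‖u t‖ ^ p)
    (hfb : ∀ t, 0 ≤ t → ENNReal.ofReal t < T → ‖f t‖ ≤ β t)
    (hVud : ∀ t, 0 ≤ t → ENNReal.ofReal t < T →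
      DifferentiableAt ℝ (fun s => ‖V s (u s)‖) t)
    (ω : ℝ) (hω : 0 ≤ ω)
    (hβω : ∀ t, 0 ≤ t → β t ≤ α t * ω ^ p * ‖U t‖ ^ p)
    (hpos : 0 < ‖u₀‖ + ω)
    (hJint : IntegrableOn (fun ξ => α ξ * ‖V ξ‖ * ‖U ξ‖ ^ p) (Set.Ioi (0:ℝ)))
    (J : ℝ) (hJ : J = ∫ ξ in Set.Ioi (0:ℝ), α ξ * ‖V ξ‖ * ‖U ξ‖ ^ p)
    (hsmall : (p - 1) * J < (‖u₀‖ + ω) ^ (1 - p)) :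
    ∀ t, 0 ≤ t → ENNReal.ofReal t < T →
      ‖u t‖ ≤ ‖U t‖ * ((1 / ((‖u₀‖ + ω) ^ (1 - p) - (p - 1) * J)) ^ (1 / (p - 1)) - ω) := by
  intro t ht htT
  set c : ℝ := ‖u₀‖ + ω with hcdef
  have hp0 : (0:ℝ) < p - 1 := by linarith
  have hppos : (0:ℝ) < p := by linarith
  have hmemT : ∀ s, s ∈ Set.Icc (0:ℝ) t → ENNReal.ofReal s < T := fun s hs =>
    lt_of_le_of_lt (ENNReal.ofReal_le_ofReal hs.2) htT
  set v : ℝ → X := fun s => V s (u s) with hvdef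
  -- derivative of v
  have hvd : ∀ s, 0 ≤ s → ENNReal.ofReal s < T →
      HasDerivAt v (V s (G s + f s)) s := by
    intro s hs hsT
    have h1 := (hVd s hs).clm_apply (hud s hs hsT)
    convert h1 using 1
    simp [ContinuousLinearMap.comp_apply, map_add]
    abel
  -- continuity facts
  have hUc : ∀ s, 0 ≤ s → ContinuousAt U s := fun s hs => (hUd s hs).continuousAt
  have hVc : ∀ s, 0 ≤ s → ContinuousAt V s := fun s hs => (hVd s hs).continuousAt
  have hvc : ∀ s, s ∈ Set.Icc (0:ℝ) t → ContinuousAt v s := fun s hs =>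
    (hvd s hs.1 (hmemT s hs)).continuousAt
  set g : ℝ → ℝ := fun s => α s * ‖V s‖ * ‖U s‖ ^ p with hgdef
  set F : ℝ → ℝ := fun s => g s * (‖v s‖ + ω) ^ p with hFdef
  have hgc : ∀ s, 0 ≤ s → ContinuousAt g s := by
    intro s hs
    exact (hαc.continuousAt.mul (hVc s hs).norm).mul
      ((hUc s hs).norm.rpow_const (Or.inr hppos.le))
  have hFc : ∀ s, s ∈ Set.Icc (0:ℝ) t → ContinuousAt F s := by
    intro s hs
    exact (hgc s hs.1).mul
      (((hvc s hs).norm.add continuousAt_const).rpow_const (Or.inr hppos.le))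
  have hg0 : ∀ s, 0 ≤ g s := fun s =>
    mul_nonneg (mul_nonneg (hα0 s) (norm_nonneg _)) (Real.rpow_nonneg (norm_nonneg _) p)
  have hF0 : ∀ s, 0 ≤ F s := fun s =>
    mul_nonneg (hg0 s) (Real.rpow_nonneg (by positivity) p)
  have hFcont : ContinuousOn F (Set.Icc 0 t) := fun s hs => (hFc s hs).continuousWithinAt
  have hgcont : ContinuousOn g (Set.Icc 0 t) := fun s hs => (hgc s hs.1).continuousWithinAt
  have hFint : ∀ x, x ∈ Set.Icc (0:ℝ) t → IntervalIntegrable F volume 0 x := by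
    intro x hx
    have h : ContinuousOn F (Set.uIcc 0 x) := by
      rw [Set.uIcc_of_le hx.1]
      exact hFcont.mono (Set.Icc_subset_Icc_right hx.2)
    exact h.intervalIntegrable
  have hgint : ∀ x, x ∈ Set.Icc (0:ℝ) t → IntervalIntegrable g volume 0 x := by
    intro x hx
    have h : ContinuousOn g (Set.uIcc 0 x) := by
      rw [Set.uIcc_of_le hx.1]
      exact hgcont.mono (Set.Icc_subset_Icc_right hx.2)
    exact h.intervalIntegrable
  set w : ℝ → ℝ := fun s => c + ∫ τ in (0:ℝ)..s, F τ with hwdef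
  -- u = U (v)
  have huv : ∀ s, 0 ≤ s → u s = U s (v s) := by
    intro s hs
    have h := hUV s hs
    have h2 : ((U s).comp (V s)) (u s) = u s := by rw [h]; rfl
    simpa [ContinuousLinearMap.comp_apply] using h2.symm
  -- the pointwise bound on the derivative of v
  have hptw : ∀ τ, τ ∈ Set.Icc (0:ℝ) t → ‖V τ (G τ + f τ)‖ ≤ F τ := by
    intro τ hτ
    have hτT := hmemT τ hτ
    have h1 : ‖V τ (G τ + f τ)‖ ≤ ‖V τ‖ * (‖G τ‖ + ‖f τ‖) :=
      le_trans ((V τ).le_opNorm _) (by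
        exact mul_le_mul_of_nonneg_left (norm_add_le _ _) (norm_nonneg _))
    have hu_le : ‖u τ‖ ^ p ≤ ‖U τ‖ ^ p * ‖v τ‖ ^ p := by
      rw [← Real.mul_rpow (norm_nonneg _) (norm_nonneg _)]
      exact Real.rpow_le_rpow (norm_nonneg _)
        (by rw [huv τ hτ.1]; exact (U τ).le_opNorm _) hppos.le
    have hG : ‖G τ‖ ≤ α τ * (‖U τ‖ ^ p * ‖v τ‖ ^ p) :=
      le_trans (hGb τ hτ.1 hτT) (mul_le_mul_of_nonneg_left hu_le (hα0 τ))
    have hf : ‖f τ‖ ≤ α τ * ω ^ p * ‖U τ‖ ^ p := le_trans (hfb τ hτ.1 hτT) (hβω τ hτ.1)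
    have hsum : ‖v τ‖ ^ p + ω ^ p ≤ (‖v τ‖ + ω) ^ p :=
      aux_add_rpow (norm_nonneg _) hω hp.le
    have h2 : ‖G τ‖ + ‖f τ‖ ≤ α τ * ‖U τ‖ ^ p * (‖v τ‖ + ω) ^ p := by
      have h3 : ‖G τ‖ + ‖f τ‖ ≤ α τ * ‖U τ‖ ^ p * (‖v τ‖ ^ p + ω ^ p) := by
        have := add_le_add hG hf
        calc ‖G τ‖ + ‖f τ‖ ≤ α τ * (‖U τ‖ ^ p * ‖v τ‖ ^ p) + α τ * ω ^ p * ‖U τ‖ ^ p := this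
          _ = α τ * ‖U τ‖ ^ p * (‖v τ‖ ^ p + ω ^ p) := by ring
      exact le_trans h3 (mul_le_mul_of_nonneg_left hsum
        (mul_nonneg (hα0 τ) (Real.rpow_nonneg (norm_nonneg _) p)))
    calc ‖V τ (G τ + f τ)‖ ≤ ‖V τ‖ * (‖G τ‖ + ‖f τ‖) := h1
      _ ≤ ‖V τ‖ * (α τ * ‖U τ‖ ^ p * (‖v τ‖ + ω) ^ p) :=
          mul_le_mul_of_nonneg_left h2 (norm_nonneg _)
      _ = F τ := by simp only [hFdef, hgdef]; ring
  -- key integral inequality : ‖v s‖ + ω ≤ w s on [0, t]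
  have hkey : ∀ s, s ∈ Set.Icc (0:ℝ) t → ‖v s‖ + ω ≤ w s := by
    intro s hs
    have hIcc : Set.uIcc (0:ℝ) s = Set.Icc 0 s := Set.uIcc_of_le hs.1
    have hvi : IntervalIntegrable (fun τ => V τ (G τ + f τ)) volume 0 s := by
      have hsub : Set.Icc (0:ℝ) s ⊆ {τ : ℝ | 0 ≤ τ ∧ ENNReal.ofReal τ < T} := by
        intro τ hτ
        exact ⟨hτ.1, hmemT τ ⟨hτ.1, le_trans hτ.2 hs.2⟩⟩
      have hcc : ContinuousOn (fun τ => V τ (G τ + f τ)) (Set.Icc 0 s) := by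
        apply ContinuousOn.clm_apply
        · exact fun τ hτ => (hVc τ hτ.1).continuousWithinAt
        · exact ((hGc.mono hsub).add (hfc.mono hsub))
      rw [← hIcc] at hcc
      exact hcc.intervalIntegrable
    have hftc : ∫ τ in (0:ℝ)..s, V τ (G τ + f τ) = v s - v 0 := by
      apply intervalIntegral.integral_eq_sub_of_hasDerivAt
      · intro τ hτ
        rw [hIcc] at hτ
        exact hvd τ hτ.1 (hmemT τ ⟨hτ.1, le_trans hτ.2 hs.2⟩)
      · exact hvi
    have hv0 : v 0 = u₀ := by simp [hvdef, hV0, hu0]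
    have hnorm : ‖v s‖ ≤ ‖u₀‖ + ∫ τ in (0:ℝ)..s, F τ := by
      have h1 : v s = v 0 + ∫ τ in (0:ℝ)..s, V τ (G τ + f τ) := by
        rw [hftc]; abel
      have h2 : ‖∫ τ in (0:ℝ)..s, V τ (G τ + f τ)‖ ≤ ∫ τ in (0:ℝ)..s, ‖V τ (G τ + f τ)‖ :=
        intervalIntegral.norm_integral_le_integral_norm hs.1
      have h3 : (∫ τ in (0:ℝ)..s, ‖V τ (G τ + f τ)‖) ≤ ∫ τ in (0:ℝ)..s, F τ := by
        apply intervalIntegral.integral_mono_on hs.1 hvi.norm (hFint s hs)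
        intro τ hτ
        exact hptw τ ⟨hτ.1, le_trans hτ.2 hs.2⟩
      calc ‖v s‖ = ‖v 0 + ∫ τ in (0:ℝ)..s, V τ (G τ + f τ)‖ := by rw [← h1]
        _ ≤ ‖v 0‖ + ‖∫ τ in (0:ℝ)..s, V τ (G τ + f τ)‖ := norm_add_le _ _
        _ ≤ ‖u₀‖ + ∫ τ in (0:ℝ)..s, F τ := by rw [hv0]; linarith
    simp only [hwdef, hcdef]
    linarith
  have hwpos : ∀ s, s ∈ Set.Icc (0:ℝ) t → 0 < w s ∧ c ≤ w s := by
    intro s hs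
    have h : 0 ≤ ∫ τ in (0:ℝ)..s, F τ :=
      intervalIntegral.integral_nonneg hs.1 (fun τ _ => hF0 τ)
    constructor
    · simp only [hwdef]; linarith
    · simp only [hwdef]; linarith
  -- the Bihari / nonlinear Gronwall step
  set A : ℝ → ℝ := fun s => ∫ τ in (0:ℝ)..s, g τ with hAdef
  set ψ : ℝ → ℝ := fun s => w s ^ (1 - p) + (p - 1) * A s with hψdef
  have hψmono : ψ 0 ≤ ψ t := by
    rcases eq_or_lt_of_le ht with h | h
    · rw [← h]
    have hmono : MonotoneOn ψ (Set.Icc 0 t) := by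
      apply monotoneOn_of_deriv_nonneg (convex_Icc 0 t)
      · -- continuity of ψ on Icc 0 t
        have hwc : ContinuousOn w (Set.Icc 0 t) := by
          apply continuousOn_const.add
          have h_int : IntegrableOn F (Set.uIcc 0 t) := by
            rw [Set.uIcc_of_le ht]
            exact hFcont.integrableOn_compact isCompact_Icc
          have := intervalIntegral.continuousOn_primitive_interval h_int
          rwa [Set.uIcc_of_le ht] at this
        have hwrc : ContinuousOn (fun s => w s ^ (1 - p)) (Set.Icc 0 t) :=
          hwc.rpow_const (fun s hs => Or.inl (ne_of_gt (hwpos s hs).1))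
        have hAc : ContinuousOn A (Set.Icc 0 t) := by
          have h_int : IntegrableOn g (Set.uIcc 0 t) := by
            rw [Set.uIcc_of_le ht]
            exact hgcont.integrableOn_compact isCompact_Icc
          have := intervalIntegral.continuousOn_primitive_interval h_int
          rwa [Set.uIcc_of_le ht] at this
        exact hwrc.add (continuousOn_const.mul hAc)
      all_goals {
        rw [interior_Icc]
        intro x hx
        have hx0 : (0:ℝ) ≤ x := hx.1.le
        have hxI : x ∈ Set.Icc (0:ℝ) t := ⟨hx0, hx.2.le⟩
        have hmeasF : StronglyMeasurableAtFilter F (nhds x) :=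
          ⟨Set.Icc 0 t, Icc_mem_nhds hx.1 hx.2,
            (hFcont.aestronglyMeasurable measurableSet_Icc)⟩
        have hmeasg : StronglyMeasurableAtFilter g (nhds x) :=
          ⟨Set.Icc 0 t, Icc_mem_nhds hx.1 hx.2,
            (hgcont.aestronglyMeasurable measurableSet_Icc)⟩
        have hwd : HasDerivAt w (F x) x :=
          (intervalIntegral.integral_hasDerivAt_right (hFint x hxI) hmeasF (hFc x hxI)).const_add c
        have hAd : HasDerivAt A (g x) x :=
          intervalIntegral.integral_hasDerivAt_right (hgint x hxI) hmeasg (hgc x hx0)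
        have hwx : 0 < w x := (hwpos x hxI).1
        have hψd : HasDerivAt ψ (F x * (1 - p) * w x ^ (1 - p - 1) + (p - 1) * g x) x :=
          (hwd.rpow_const (Or.inl (ne_of_gt hwx))).add (hAd.const_mul (p - 1))
        first
        | exact (hψd.differentiableAt).differentiableWithinAt
        | { rw [hψd.deriv]
            have hF_le : F x ≤ g x * w x ^ p := by
              apply mul_le_mul_of_nonneg_left _ (hg0 x)
              exact Real.rpow_le_rpow (by positivity) (hkey x hxI) hppos.le
            have hwnegp : (0:ℝ) < w x ^ (1 - p - 1) := Real.rpow_pos_of_pos hwx _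
            have hmul : w x ^ p * w x ^ (1 - p - 1) = 1 := by
              rw [← Real.rpow_add hwx]
              have he : p + (1 - p - 1) = 0 := by ring
              rw [he, Real.rpow_zero]
            have hkey2 : F x * w x ^ (1 - p - 1) ≤ g x := by
              calc F x * w x ^ (1 - p - 1) ≤ (g x * w x ^ p) * w x ^ (1 - p - 1) :=
                    mul_le_mul_of_nonneg_right hF_le hwnegp.le
                _ = g x * (w x ^ p * w x ^ (1 - p - 1)) := by ring
                _ = g x := by rw [hmul, mul_one]
            nlinarith [hg0 x, hF0 x] }
      }
    exact hmono (Set.left_mem_Icc.mpr ht) (Set.right_mem_Icc.mpr ht) ht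
  -- conclude
  have htI : t ∈ Set.Icc (0:ℝ) t := Set.right_mem_Icc.mpr ht
  have hwt : 0 < w t := (hwpos t htI).1
  set D : ℝ := c ^ (1 - p) - (p - 1) * J with hDdef
  have hD : 0 < D := by simp only [hDdef]; linarith [hsmall]
  have hψ0 : ψ 0 = c ^ (1 - p) := by
    simp [hψdef, hAdef, hwdef, intervalIntegral.integral_same]
  have hJ0 : A t ≤ J := by
    have h1 : A t = ∫ τ in Set.Ioc 0 t, g τ := intervalIntegral.integral_of_le ht
    rw [h1, hJ]
    apply setIntegral_mono_set hJint
    · exact Eventually.of_forall (fun τ => hg0 τ)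
    · exact HasSubset.Subset.eventuallyLE Set.Ioc_subset_Ioi_self
  have hwD : D ≤ w t ^ (1 - p) := by
    have h1 : c ^ (1 - p) ≤ w t ^ (1 - p) + (p - 1) * A t := by
      have := hψmono
      rw [hψ0] at this
      simpa [hψdef] using this
    have h2 : (p - 1) * A t ≤ (p - 1) * J := mul_le_mul_of_nonneg_left hJ0 hp0.le
    simp only [hDdef]
    linarith
  have hwle : w t ≤ (1 / D) ^ (1 / (p - 1)) := by
    have hexp : (1:ℝ) / (1 - p) ≤ 0 := by
      apply div_nonpos_of_nonneg_of_nonpos zero_le_one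
      linarith
    have h1 : (w t ^ (1 - p)) ^ ((1:ℝ) / (1 - p)) ≤ D ^ ((1:ℝ) / (1 - p)) :=
      Real.rpow_le_rpow_of_nonpos hD hwD hexp
    have h2 : (w t ^ (1 - p)) ^ ((1:ℝ) / (1 - p)) = w t := by
      rw [← Real.rpow_mul hwt.le]
      have hne : (1:ℝ) - p ≠ 0 := by linarith
      have he : (1 - p) * (1 / (1 - p)) = 1 := mul_one_div_cancel hne
      rw [he, Real.rpow_one]
    have h3 : D ^ ((1:ℝ) / (1 - p)) = (1 / D) ^ ((1:ℝ) / (p - 1)) := by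
      have he : (1:ℝ) / (1 - p) = -(1 / (p - 1)) := by
        rw [← neg_div, div_eq_div_iff (by linarith : (1:ℝ) - p ≠ 0) (by linarith : p - 1 ≠ 0)]
        ring
      rw [he, Real.rpow_neg hD.le, ← Real.inv_rpow hD.le, one_div, one_div]
    rw [h2, h3] at h1
    exact h1
  have hvt : ‖v t‖ ≤ w t - ω := by linarith [hkey t htI]
  have hut : ‖u t‖ ≤ ‖U t‖ * ‖v t‖ := by
    rw [huv t ht]; exact (U t).le_opNorm _
  calc ‖u t‖ ≤ ‖U t‖ * ‖v t‖ := hut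
    _ ≤ ‖U t‖ * ((1 / D) ^ (1 / (p - 1)) - ω) := by
        apply mul_le_mul_of_nonneg_left _ (norm_nonneg _)
        exact le_trans hvt (sub_le_sub_right hwle ω)
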